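/- arXiv:2310.14509 — 2 statements merged into one kernel-verified Lean document; each statement's English description precedes it below -/
import Mathlib

section
/- Let J : Π → ℝ be a reward function on a set Π of policies and D : Π × Π → ℝ a metric on Π. Fix δ > 0 and M ≥ 1. Suppose π₁,…,π_M ∈ Π maximize ∑ᵢ J(πᵢ) subject to D(πⱼ, πₖ) ≥ δ for all j ≠ k, with optimal value T₁. Suppose π̃₁,…,π̃_M are defined iteratively so that π̃ᵢ maximizes J(π) subject to D(π, π̃ⱼ) ≥ δ/2 for all 1 ≤ j < i (and all these maxima exist). Then T₂ := ∑ᵢ J(π̃ᵢ) satisfies T₂ ≥ T₁. -/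
/-- Theorem 1: iterative learning with threshold δ/2 achieves total reward at least
that of population-based training with threshold δ. -/
theorem stmt_0 {P : Type*} (D : P → P → ℝ) (J : P → ℝ)
    (hsymm : ∀ a b, D a b = D b a)
    (htri : ∀ a b c, D a c ≤ D a b + D b c)
    (hnonneg : ∀ a b, 0 ≤ D a b)
    (δ : ℝ) (hδ : 0 < δ) (M : ℕ) (hM : 1 ≤ M)
    (p : Fin M → P)
    (hfeas : ∀ j k : Fin M, j ≠ k → δ ≤ D (p j) (p k))
    (hopt : ∀ p' : Fin M → P, (∀ j k : Fin M, j ≠ k → δ ≤ D (p' j) (p' k)) →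
      ∑ i, J (p' i) ≤ ∑ i, J (p i))
    (q : Fin M → P)
    (hiterfeas : ∀ i j : Fin M, j < i → δ / 2 ≤ D (q i) (q j))
    (hitermax : ∀ i : Fin M, ∀ x : P,
      (∀ j : Fin M, j < i → δ / 2 ≤ D x (q j)) → J x ≤ J (q i)) :
    ∑ i, J (p i) ≤ ∑ i, J (q i) := by
  classical
  set v : Fin M → ℝ := fun k => J (p k) with hv
  set σ : Equiv.Perm (Fin M) := Tuple.sort v with hσ
  have hmono : Monotone (v ∘ σ) := Tuple.monotone_sort v
  -- feasible p-indices at step i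
  set S : Fin M → Finset (Fin M) :=
    fun i => Finset.univ.filter (fun k => ∀ j : Fin M, j < i → δ / 2 ≤ D (p k) (q j)) with hS
  have hScard : ∀ i : Fin M, M - i.val ≤ (S i).card := by
    intro i
    have hcompl : (Finset.univ \ S i).card ≤ i.val := by
      have hex : ∀ k ∈ Finset.univ \ S i, ∃ j : Fin M, j < i ∧ D (p k) (q j) < δ / 2 := by
        intro k hk
        simp only [hS, Finset.mem_sdiff, Finset.mem_filter, Finset.mem_univ, true_and] at hk
        push_neg at hk
        obtain ⟨j, hj1, hj2⟩ := hk
        exact ⟨j, hj1, by linarith⟩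
      have hex' : ∀ k : Fin M, ∃ j : Fin M, k ∈ Finset.univ \ S i → (j < i ∧ D (p k) (q j) < δ / 2) := by
        intro k
        by_cases hk : k ∈ Finset.univ \ S i
        · obtain ⟨j, hj⟩ := hex k hk; exact ⟨j, fun _ => hj⟩
        · exact ⟨i, fun h => absurd h hk⟩
      choose f hf using hex'
      have : (Finset.univ \ S i).card ≤ (Finset.Iio i).card := by
        apply Finset.card_le_card_of_injOn f
        · intro k hk
          simp only [Finset.mem_coe, Finset.mem_Iio, Finset.coe_Iio, Set.mem_Iio]
          exact (hf k hk).1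
        · intro a ha b hb hab
          rw [Finset.mem_coe] at ha hb
          by_contra hne
          have h1 := (hf a ha).2
          have h2 := (hf b hb).2
          rw [hab] at h1
          have := htri (p a) (q (f b)) (p b)
          rw [hsymm (q (f b)) (p b)] at this
          have := hfeas a b hne
          linarith
      simpa using this
    have huniv : (Finset.univ : Finset (Fin M)).card = M := by simp
    have := Finset.card_sdiff_add_card_eq_card (Finset.subset_univ (S i))
    omega
  -- key pointwise bound: v (σ i.rev) ≤ J (q i)
  have hkey : ∀ i : Fin M, v (σ i.rev) ≤ J (q i) := by
    intro i
    set T : Finset (Fin M) := (Finset.Ici i.rev).image σ with hT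
    have hTcard : T.card = i.val + 1 := by
      rw [hT, Finset.card_image_of_injective _ σ.injective, Fin.card_Ici, Fin.val_rev]
      omega
    have hinter : (S i ∩ T).Nonempty := by
      rw [← Finset.card_pos]
      have hunion : (S i ∪ T).card ≤ M := by
        simpa using Finset.card_le_card (Finset.subset_univ (S i ∪ T))
      have := Finset.card_union_add_card_inter (S i) T
      have := hScard i
      have : i.val < M := i.isLt
      omega
    obtain ⟨k, hk⟩ := hinter
    rw [Finset.mem_inter] at hk
    obtain ⟨hkS, hkT⟩ := hk
    obtain ⟨m, hm, rfl⟩ := Finset.mem_image.mp hkT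
    rw [Finset.mem_Ici] at hm
    have h1 : v (σ i.rev) ≤ v (σ m) := hmono hm
    simp only [hS, Finset.mem_filter] at hkS
    exact h1.trans (hitermax i (p (σ m)) hkS.2)
  have hsum : ∑ i : Fin M, v (σ i.rev) = ∑ i, v i := by
    have h := Equiv.sum_comp (Fin.revPerm.trans σ) v
    simpa [Equiv.trans_apply] using h
  calc ∑ i, J (p i) = ∑ i : Fin M, v (σ i.rev) := hsum.symm
    _ ≤ ∑ i, J (q i) := Finset.sum_le_sum (fun i _ => hkey i)
end

section
/- Let Π be a set, D : Π × Π → ℝ a metric, J : Π → ℝ bounded above, and δ > 0. Suppose the feasible set of the PBT problem {(π₁,…,π_M) : D(πⱼ,πₖ) ≥ δ ∀ j≠k} is nonempty. Then the feasible set of the iterative problem with threshold δ/2 is nonempty at every step i ≤ M: i.e., given any π̃₁,…,π̃_{i-1} obtained by iteratively maximizing J under the (δ/2)-constraints, there exists π with D(π, π̃ⱼ) ≥ δ/2 for all j < i. In particular, at least one of the M points of any PBT-feasible tuple is (δ/2)-far from all of π̃₁,…,π̃_{i-1}. -/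
/-- Feasibility of every step of the iterative problem with threshold δ/2,
given a nonempty feasible set for the PBT problem with threshold δ: some point
of the δ-separated M-tuple is (δ/2)-far from all the i-1 previously obtained
iterative policies. -/
theorem stmt_10 {X : Type*} [MetricSpace X] (J : X → ℝ) (C : ℝ)
    (hbd : ∀ x, J x ≤ C) (δ : ℝ) (hδ : 0 < δ) (M : ℕ) (hM : 1 ≤ M)
    (p : Fin M → X)
    (hfeas : ∀ j k : Fin M, j ≠ k → δ ≤ dist (p j) (p k))
    (i : ℕ) (hi : i ≤ M) (y : Fin (i - 1) → X)
    (hiterfeas : ∀ j j' : Fin (i - 1), j' < j → δ / 2 ≤ dist (y j) (y j'))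
    (hitermax : ∀ j : Fin (i - 1), ∀ x : X,
      (∀ j' : Fin (i - 1), j' < j → δ / 2 ≤ dist x (y j')) → J x ≤ J (y j)) :
    (∃ k : Fin M, ∀ j : Fin (i - 1), δ / 2 ≤ dist (p k) (y j)) ∧
    (∃ x : X, ∀ j : Fin (i - 1), δ / 2 ≤ dist x (y j)) := by
  have key : ∃ k : Fin M, ∀ j : Fin (i - 1), δ / 2 ≤ dist (p k) (y j) := by
    by_contra h
    push_neg at h
    choose f hf using h
    have hinj : Function.Injective f := by
      intro k k' hkk'
      by_contra hne
      have h1 := hf k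
      have h2 := hf k'
      rw [hkk'] at h1
      have := hfeas k k' hne
      have htri : dist (p k) (p k') ≤ dist (p k) (y (f k')) + dist (y (f k')) (p k') :=
        dist_triangle _ _ _
      rw [dist_comm (y (f k'))] at htri
      linarith
    have := Fintype.card_le_of_injective f hinj
    simp only [Fintype.card_fin] at this
    omega
  obtain ⟨k, hk⟩ := key
  exact ⟨⟨k, hk⟩, ⟨p k, hk⟩⟩
end
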